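/- Let K be a field of characteristic not 2 with ζ ∈ K, ζ² = -1, and suppose 2 and -7 are squares in K with fixed square roots. For t₁ = (1+ζ)(3+ζ√(-7))/2 and t₂ = (-1+ζ)(3+ζ√(-7))/2, the corresponding values sᵢ = -(tᵢ⁴+1)/tᵢ² satisfy s₁ = 6√(-7) and s₂ = -6√(-7); in particular s₁ + s₂ = 0 and s₁·s₂ = 252, so (using I(s) = -(s-2)²/(4(s+2))) the invariants I₁ = I(s₁), I₂ = I(s₂) are the two roots of x² - (47/16)x + 16: I₁ + I₂ = 47/16 and I₁·I₂ = 16. -/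

import Mathlib

/-- For `t₁ = (1+ζ)(3+ζr7)/2`, `t₂ = (-1+ζ)(3+ζr7)/2` (with
`ζ² = -1`, `r2² = 2`, `r7² = -7`), the values `sᵢ = -(tᵢ⁴+1)/tᵢ²` satisfy
`s₁ = 6r7`, `s₂ = -6r7`, so `s₁+s₂ = 0`, `s₁s₂ = 252`; and the invariants
`Iᵢ = -(sᵢ-2)²/(4(sᵢ+2))` are the roots of `x² - (47/16)x + 16`:
`I₁+I₂ = 47/16` and `I₁·I₂ = 16`. -/
theorem stmt18 {K : Type*} [Field K] (h2 : (2 : K) ≠ 0)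
    (ζ r2 r7 : K) (hζ : ζ ^ 2 = -1) (hr2 : r2 ^ 2 = 2) (hr7 : r7 ^ 2 = -7)
    (t₁ t₂ : K)
    (ht₁ : t₁ = (1 + ζ) * (3 + ζ * r7) / 2)
    (ht₂ : t₂ = (-1 + ζ) * (3 + ζ * r7) / 2)
    (s₁ s₂ : K)
    (hs₁ : s₁ = -(t₁ ^ 4 + 1) / t₁ ^ 2) (hs₂ : s₂ = -(t₂ ^ 4 + 1) / t₂ ^ 2)
    (I₁ I₂ : K)
    (hI₁ : I₁ = -(s₁ - 2) ^ 2 / (4 * (s₁ + 2)))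
    (hI₂ : I₂ = -(s₂ - 2) ^ 2 / (4 * (s₂ + 2))) :
    s₁ = 6 * r7 ∧ s₂ = -6 * r7 ∧ s₁ + s₂ = 0 ∧ s₁ * s₂ = 252 ∧
      I₁ + I₂ = 47 / 16 ∧ I₁ * I₂ = 16 := by
  have h256 : (256 : K) ≠ 0 := by
    have := pow_ne_zero 8 h2; norm_num at this; exact_mod_cast this
  have h32 : (32 : K) ≠ 0 := by
    have := pow_ne_zero 5 h2; norm_num at this; exact_mod_cast this
  have ht1sq : t₁ ^ 2 = 8 * ζ - 3 * r7 := by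
    subst ht₁; field_simp
    linear_combination (9 + 6*ζ*r7 + ζ^2*r7^2 + 32 - 39 + 12*r7 - r7^2 + 2*ζ*r7^2) * hζ
      + (ζ^2 + 3 - 2 - 2*ζ) * hr7
  have ht2sq : t₂ ^ 2 = -(8 * ζ - 3 * r7) := by
    subst ht₂; field_simp
    linear_combination (9 + 6*ζ*r7 + ζ^2*r7^2 - 32 + 25 - 12*r7 - r7^2 - 2*ζ*r7^2) * hζ
      + (ζ^2 - 3 + 4 + 2*ζ) * hr7
  have ha : (8 * ζ - 3 * r7) ≠ 0 := by
    intro h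
    apply one_ne_zero (α := K)
    linear_combination (64:K)*hζ - 9*hr7 - (8*ζ+3*r7)*h
  have ha' : (-(8 * ζ - 3 * r7)) ≠ 0 := neg_ne_zero.mpr ha
  have hS1 : s₁ = 6 * r7 := by
    rw [hs₁, show t₁ ^ 4 = (t₁ ^ 2) ^ 2 by ring, ht1sq, div_eq_iff ha]
    linear_combination (-64 : K) * hζ + 9 * hr7
  have hS2 : s₂ = -6 * r7 := by
    rw [hs₂, show t₂ ^ 4 = (t₂ ^ 2) ^ 2 by ring, ht2sq, div_eq_iff ha']
    linear_combination (-64 : K) * hζ + 9 * hr7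
  have hd1 : s₁ + 2 ≠ 0 := by
    rw [hS1]; intro h
    exact h256 (by linear_combination (36:K)*hr7 + (-6*r7+2)*h)
  have hd2 : s₂ + 2 ≠ 0 := by
    rw [hS2]; intro h
    exact h256 (by linear_combination (36:K)*hr7 + (6*r7+2)*h)
  have h4 : (4 : K) ≠ 0 := by
    intro h
    apply h2
    have h' : (2:K) * 2 = 0 := by rw [show (2:K)*2 = 4 by norm_num, h]
    exact mul_self_eq_zero.mp h'
  have hd1' : (4 : K) * (6 * r7 + 2) ≠ 0 := mul_ne_zero h4 (hS1 ▸ hd1)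
  have hd2' : (4 : K) * (-6 * r7 + 2) ≠ 0 := mul_ne_zero h4 (hS2 ▸ hd2)
  have e1 : I₁ = (47 - 45 * r7) / 32 := by
    rw [hI₁, hS1, div_eq_div_iff hd1' h32]
    linear_combination (-72 : K) * hr7
  have e2 : I₂ = (47 + 45 * r7) / 32 := by
    rw [hI₂, hS2, div_eq_div_iff hd2' h32]
    linear_combination (-72 : K) * hr7
  refine ⟨hS1, hS2, by rw [hS1, hS2]; ring,
    by rw [hS1, hS2]; linear_combination (-36 : K) * hr7, ?_, ?_⟩
  · have h16 : (16 : K) ≠ 0 := by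
      have := pow_ne_zero 4 h2; norm_num at this; exact_mod_cast this
    rw [e1, e2, ← add_div, div_eq_div_iff h32 h16]; ring
  · rw [e1, e2, div_mul_div_comm, div_eq_iff (mul_ne_zero h32 h32)]
    linear_combination (-2025 : K) * hr7
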